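/- Assume θ_0, …, θ_d are mutually distinct. Then: (i) if a = q^{d+1} then θ_0 = q + q^{−1}; (ii) if a = q^{−d−1} then θ_d = q + q^{−1}; (iii) if a ≠ q^{d+1} and a ≠ q^{−d−1} then θ_i ≠ q + q^{−1} for all 0 ≤ i ≤ d. -/
import Mathlib

theorem stmt_6 {F : Type*} [Field F] (a q : F) (ha : a ≠ 0) (hq : q ≠ 0)
    (hq4 : q ^ 4 ≠ 1) (d : ℕ)
    (θ : ℕ → F) (hθ : ∀ i, θ i = a * q ^ (2*(i:ℤ) - d) + a⁻¹ * q ^ ((d:ℤ) - 2*i))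
    (hdist : ∀ i j, i ≤ d → j ≤ d → i ≠ j → θ i ≠ θ j) :
    (a = q ^ (d+1) → θ 0 = q + q⁻¹) ∧
    (a = q ^ (-(d:ℤ) - 1) → θ d = q + q⁻¹) ∧
    (a ≠ q ^ (d+1) → a ≠ q ^ (-(d:ℤ) - 1) → ∀ i, i ≤ d → θ i ≠ q + q⁻¹) := by
  have hxne : ∀ i : ℕ, a * q ^ (2*(i:ℤ) - d) ≠ 0 := fun i =>
    mul_ne_zero ha (zpow_ne_zero _ hq)
  have hform : ∀ i : ℕ, θ i = a * q ^ (2*(i:ℤ) - d) + (a * q ^ (2*(i:ℤ) - d))⁻¹ := by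
    intro i
    rw [hθ i, mul_inv, show (d:ℤ) - 2*i = -(2*(i:ℤ) - d) by ring, zpow_neg]
  have hnat : (q : F) ^ (d+1) = q ^ ((d:ℤ)+1) := by
    rw [← zpow_natCast]; push_cast; ring_nf
  have h2eq : (q : F) ^ (2:ℤ) = q * q := by
    rw [show (2:ℤ) = 1 + 1 by norm_num, zpow_add₀ hq, zpow_one]
  have key : ∀ x : F, x ≠ 0 → x + x⁻¹ = q + q⁻¹ → x = q ∨ x = q⁻¹ := by
    intro x hx hsum
    field_simp at hsum
    have h : (x - q) * (x * q - 1) = 0 := by linear_combination hsum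
    rcases mul_eq_zero.mp h with h1 | h1
    · left; exact sub_eq_zero.mp h1
    · right; field_simp; linear_combination h1
  refine ⟨?_, ?_, ?_⟩
  · intro h
    rw [hform 0]
    have hx : a * q ^ (2*((0:ℕ):ℤ) - d) = q := by
      rw [h, hnat, ← zpow_add₀ hq]
      push_cast
      norm_num
    rw [hx]
  · intro h
    rw [hform d]
    have hx : a * q ^ (2*((d:ℕ):ℤ) - d) = q⁻¹ := by
      rw [h, ← zpow_add₀ hq, show -(d:ℤ) - 1 + (2*(d:ℤ) - d) = -1 by ring, zpow_neg_one]
    rw [hx, inv_inv, add_comm]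
  · intro h1 h2 i hi hcon
    rw [hform i] at hcon
    rcases key _ (hxne i) hcon with hx | hx
    · rcases Nat.eq_zero_or_pos i with h0 | h0
      · subst h0
        apply h1
        rw [show 2*((0:ℕ):ℤ) - d = -(d:ℤ) by norm_num] at hx
        have ha' : a = q * q ^ (d:ℤ) := by
          calc a = a * q ^ (-(d:ℤ)) * q ^ (d:ℤ) := by
                rw [mul_assoc, ← zpow_add₀ hq, neg_add_cancel, zpow_zero, mul_one]
            _ = q * q ^ (d:ℤ) := by rw [hx]
        rw [hnat, ha', zpow_add₀ hq, zpow_one, mul_comm]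
      · obtain ⟨j, rfl⟩ := Nat.exists_eq_add_of_lt h0
        simp only [Nat.zero_add] at *
        apply hdist (j+1) j (by omega) (by omega) (by omega)
        rw [hform (j+1), hform j]
        have hxj : a * q ^ (2*(j:ℤ) - d) = q⁻¹ := by
          have h3 : a * q ^ (2*(j:ℤ) - d) * (q * q) = q := by
            rw [← h2eq, mul_assoc, ← zpow_add₀ hq,
              show 2*(j:ℤ) - d + 2 = 2*((j:ℤ)+1) - d by ring]
            push_cast at hx
            exact hx
          have h5 : (a * q ^ (2*(j:ℤ) - d) * q) * q = 1 * q := by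
            rw [one_mul]; linear_combination h3
          have h6 := mul_right_cancel₀ hq h5
          field_simp
          linear_combination h6
        rw [hx, hxj, inv_inv, add_comm]
    · rcases Nat.lt_or_ge i d with hlt | hge
      · apply hdist i (i+1) (by omega) (by omega) (by omega)
        rw [hform (i+1), hform i]
        have hxj : a * q ^ (2*((i+1:ℕ):ℤ) - d) = q := by
          push_cast
          rw [show 2*((i:ℤ)+1) - d = (2*(i:ℤ) - d) + 2 by ring, zpow_add₀ hq, ← mul_assoc,
            hx, h2eq, ← mul_assoc, inv_mul_cancel₀ hq, one_mul]
        rw [hx, hxj, inv_inv, add_comm]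
      · have hid : i = d := le_antisymm hi hge
        subst hid
        apply h2
        have ha' : a = q⁻¹ * q ^ (-(i:ℤ)) := by
          calc a = a * q ^ (2*(i:ℤ) - i) * q ^ (-(i:ℤ)) := by
                rw [mul_assoc, ← zpow_add₀ hq, show 2*(i:ℤ) - i + -(i:ℤ) = 0 by ring,
                  zpow_zero, mul_one]
            _ = q⁻¹ * q ^ (-(i:ℤ)) := by rw [hx]
        rw [ha', show -(i:ℤ) - 1 = -1 + -(i:ℤ) by ring, zpow_add₀ hq, zpow_neg_one]
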